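/- If u ∈ C⁴[0,1] satisfies u(0)=u'(0)=u''(1)=u'''(1)=0 and u⁗ ≥ 0 on [0,1], then u(t) ≥ ((3-t)t²/3)·‖u‖_∞ for all t ∈ [0,1], where ‖u‖_∞ = sup_{t∈[0,1]} |u(t)|. -/

import Mathlib

open Set intervalIntegral Real

/-- Monotonicity step from a derivative nonnegative on a subinterval of `[0,1]`. -/
lemma mono_step12 (f f' : ℝ → ℝ)
    (hf : ∀ x ∈ Set.Icc (0:ℝ) 1, HasDerivWithinAt f (f' x) (Set.Icc 0 1) x)
    {a b : ℝ} (ha : a ∈ Set.Icc (0:ℝ) 1) (hb : b ∈ Set.Icc (0:ℝ) 1) (hab : a ≤ b)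
    (hpos : ∀ x ∈ Set.Icc a b, 0 ≤ f' x) : f a ≤ f b := by
  have hsub : Set.Icc a b ⊆ Set.Icc (0:ℝ) 1 := Set.Icc_subset_Icc ha.1 hb.2
  have hcf : ContinuousOn f (Set.Icc (0:ℝ) 1) := fun x hx => (hf x hx).continuousWithinAt
  have hcont : ContinuousOn f (Set.Icc a b) := hcf.mono hsub
  have hdd : ∀ x ∈ Set.Ioo a b, HasDerivAt f (f' x) x := by
    intro x hx
    have hx01 : Set.Icc (0:ℝ) 1 ∈ nhds x :=
      Icc_mem_nhds (lt_of_le_of_lt ha.1 hx.1) (lt_of_lt_of_le hx.2 hb.2)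
    exact ((hf x (hsub (Set.Ioo_subset_Icc_self hx))).hasDerivAt hx01)
  have hmono : MonotoneOn f (Set.Icc a b) := by
    apply monotoneOn_of_deriv_nonneg (convex_Icc a b) hcont
    · intro x hx
      rw [interior_Icc] at hx
      exact (hdd x hx).differentiableAt.differentiableWithinAt
    · intro x hx
      rw [interior_Icc] at hx
      rw [(hdd x hx).deriv]
      exact hpos x (Set.Ioo_subset_Icc_self hx)
  exact hmono (Set.left_mem_Icc.2 hab) (Set.right_mem_Icc.2 hab) hab

lemma cubic_deriv12 (a b c d x : ℝ) :
    HasDerivAt (fun s : ℝ => a + b*s + c*s^2 + d*s^3) (b + 2*c*x + 3*d*x^2) x := by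
  have h1 : HasDerivAt (fun s : ℝ => s) 1 x := hasDerivAt_id x
  have h2 : HasDerivAt (fun s : ℝ => s^2) (2*x) x := by
    simpa using hasDerivAt_pow 2 x
  have h3 : HasDerivAt (fun s : ℝ => s^3) (3*x^2) x := by
    simpa using hasDerivAt_pow 3 x
  have := (((h1.const_mul b).const_add a).add (h2.const_mul c)).add (h3.const_mul d)
  refine this.congr_deriv ?_
  ring

theorem stmt12 (u u1 u2 u3 u4 : ℝ → ℝ)
    (hu1 : ∀ t ∈ Set.Icc (0:ℝ) 1, HasDerivWithinAt u (u1 t) (Set.Icc 0 1) t)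
    (hu2 : ∀ t ∈ Set.Icc (0:ℝ) 1, HasDerivWithinAt u1 (u2 t) (Set.Icc 0 1) t)
    (hu3 : ∀ t ∈ Set.Icc (0:ℝ) 1, HasDerivWithinAt u2 (u3 t) (Set.Icc 0 1) t)
    (hu4 : ∀ t ∈ Set.Icc (0:ℝ) 1, HasDerivWithinAt u3 (u4 t) (Set.Icc 0 1) t)
    (hc4 : ContinuousOn u4 (Set.Icc 0 1))
    (hb0 : u 0 = 0) (hb1 : u1 0 = 0) (hb2 : u2 1 = 0) (hb3 : u3 1 = 0)
    (hpos : ∀ t ∈ Set.Icc (0:ℝ) 1, 0 ≤ u4 t) :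
    ∀ t ∈ Set.Icc (0:ℝ) 1,
      u t ≥ (3 - t) * t ^ 2 / 3 * sSup ((fun s => |u s|) '' Set.Icc (0:ℝ) 1) := by
  have h01 : (0:ℝ) ∈ Set.Icc (0:ℝ) 1 := by norm_num
  have h11 : (1:ℝ) ∈ Set.Icc (0:ℝ) 1 := by norm_num
  -- u3 ≤ 0 on [0,1]
  have hu3neg : ∀ x ∈ Set.Icc (0:ℝ) 1, u3 x ≤ 0 := by
    intro x hx
    have := mono_step12 u3 u4 hu4 hx h11 hx.2
      (fun y hy => hpos y ⟨le_trans hx.1 hy.1, hy.2⟩)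
    linarith [hb3 ▸ this]
  -- u2 ≥ 0 on [0,1]
  have hu2pos : ∀ x ∈ Set.Icc (0:ℝ) 1, 0 ≤ u2 x := by
    intro x hx
    have := mono_step12 (fun y => -u2 y) (fun y => -u3 y)
      (fun y hy => (hu3 y hy).neg) hx h11 hx.2
      (fun y hy => neg_nonneg.2 (hu3neg y ⟨le_trans hx.1 hy.1, hy.2⟩))
    simp only [hb2, neg_zero] at this
    linarith
  -- u1 ≥ 0 on [0,1]
  have hu1pos : ∀ x ∈ Set.Icc (0:ℝ) 1, 0 ≤ u1 x := by
    intro x hx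
    have := mono_step12 u1 u2 hu2 h01 hx hx.1
      (fun y hy => hu2pos y ⟨hy.1, le_trans hy.2 hx.2⟩)
    linarith [hb1 ▸ this]
  -- u is monotone: for x ≤ y in [0,1], u x ≤ u y
  have humono : ∀ x ∈ Set.Icc (0:ℝ) 1, ∀ y ∈ Set.Icc (0:ℝ) 1, x ≤ y → u x ≤ u y := by
    intro x hx y hy hxy
    exact mono_step12 u u1 hu1 hx hy hxy
      (fun z hz => hu1pos z ⟨le_trans hx.1 hz.1, le_trans hz.2 hy.2⟩)
  have hupos : ∀ x ∈ Set.Icc (0:ℝ) 1, 0 ≤ u x := by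
    intro x hx
    have := humono 0 h01 x hx hx.1
    linarith [hb0 ▸ this]
  -- the sup equals u 1
  have hsup : sSup ((fun s => |u s|) '' Set.Icc (0:ℝ) 1) = u 1 := by
    apply IsGreatest.csSup_eq
    constructor
    · refine ⟨1, h11, ?_⟩
      exact abs_of_nonneg (hupos 1 h11)
    · rintro y ⟨x, hx, rfl⟩
      dsimp only
      rw [abs_of_nonneg (hupos x hx)]
      exact humono x hx 1 h11 hx.2
  rw [hsup]
  intro t ht
  set m : ℝ := (3 - t) * t ^ 2 / 3 with hm
  have hmval : m = (3 - t) * t ^ 2 / 3 := rfl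
  have ht0 := ht.1
  have ht1 := ht.2
  have hm1 : m ≤ 1 := by rw [hmval]; nlinarith
  have hm0 : 0 ≤ m := by rw [hmval]; nlinarith
  -- piece 1 coefficients: ψ₁ s = c1 s² + d1 s³
  set c1 : ℝ := (t - m)/2 with hc1
  set d1 : ℝ := (m - 1)/6 with hd1
  -- piece 2 coefficients: ψ₂ s = a2 + b2 s + c2 s² + d2 s³
  set a2 : ℝ := -t^3/6 with ha2
  set b2 : ℝ := t^2/2 with hb2'
  set c2 : ℝ := -m/2 with hc2
  set d2 : ℝ := m/6 with hd2
  -- E functions (combinator-shaped for definitional matching)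
  set E1 : ℝ → ℝ := fun s =>
    (0 + 0*s + c1*s^2 + d1*s^3) * u3 s - (0 + (2*c1)*s + (3*d1)*s^2 + 0*s^3) * u2 s
      + ((2*c1) + (6*d1)*s + 0*s^2 + 0*s^3) * u1 s - (6*d1) * u s with hE1
  set E2 : ℝ → ℝ := fun s =>
    (a2 + b2*s + c2*s^2 + d2*s^3) * u3 s - (b2 + (2*c2)*s + (3*d2)*s^2 + 0*s^3) * u2 s
      + ((2*c2) + (6*d2)*s + 0*s^2 + 0*s^3) * u1 s - (6*d2) * u s with hE2
  have hE1deriv : ∀ x ∈ Set.Icc (0:ℝ) 1,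
      HasDerivWithinAt E1 ((0 + 0*x + c1*x^2 + d1*x^3) * u4 x) (Set.Icc 0 1) x := by
    intro x hx
    have p0 := (cubic_deriv12 0 0 c1 d1 x).hasDerivWithinAt (s := Set.Icc (0:ℝ) 1)
    have p1 := (cubic_deriv12 0 (2*c1) (3*d1) 0 x).hasDerivWithinAt (s := Set.Icc (0:ℝ) 1)
    have p2 := (cubic_deriv12 (2*c1) (6*d1) 0 0 x).hasDerivWithinAt (s := Set.Icc (0:ℝ) 1)
    have hd := (((p0.mul (hu4 x hx)).sub (p1.mul (hu3 x hx))).add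
        (p2.mul (hu2 x hx))).sub ((hu1 x hx).const_mul (6*d1))
    refine hd.congr_deriv ?_
    ring
  have hE2deriv : ∀ x ∈ Set.Icc (0:ℝ) 1,
      HasDerivWithinAt E2 ((a2 + b2*x + c2*x^2 + d2*x^3) * u4 x) (Set.Icc 0 1) x := by
    intro x hx
    have p0 := (cubic_deriv12 a2 b2 c2 d2 x).hasDerivWithinAt (s := Set.Icc (0:ℝ) 1)
    have p1 := (cubic_deriv12 b2 (2*c2) (3*d2) 0 x).hasDerivWithinAt (s := Set.Icc (0:ℝ) 1)
    have p2 := (cubic_deriv12 (2*c2) (6*d2) 0 0 x).hasDerivWithinAt (s := Set.Icc (0:ℝ) 1)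
    have hd := (((p0.mul (hu4 x hx)).sub (p1.mul (hu3 x hx))).add
        (p2.mul (hu2 x hx))).sub ((hu1 x hx).const_mul (6*d2))
    refine hd.congr_deriv ?_
    ring
  -- kernel nonnegativity on each piece
  have hpsi1 : ∀ x ∈ Set.Icc (0:ℝ) t, 0 ≤ (0 + 0*x + c1*x^2 + d1*x^3) * u4 x := by
    intro x hx
    have hx01 : x ∈ Set.Icc (0:ℝ) 1 := ⟨hx.1, le_trans hx.2 ht1⟩
    apply mul_nonneg _ (hpos x hx01)
    have hker : 0 ≤ 3*(t - m) + (m - 1)*x := by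
      rw [hmval]; nlinarith [hx.1, hx.2, sq_nonneg t, sq_nonneg (t - x), sq_nonneg (1-t)]
    have : 0 + 0*x + c1*x^2 + d1*x^3 = x^2 * (3*(t-m) + (m-1)*x) / 6 := by
      rw [hc1, hd1]; ring
    rw [this]
    positivity
  have hpsi2 : ∀ x ∈ Set.Icc t 1, 0 ≤ (a2 + b2*x + c2*x^2 + d2*x^3) * u4 x := by
    intro x hx
    have hx01 : x ∈ Set.Icc (0:ℝ) 1 := ⟨le_trans ht0 hx.1, hx.2⟩
    apply mul_nonneg _ (hpos x hx01)
    have hker : 0 ≤ 9*x - 3*t - (3-t)*x^2*(3-x) := by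
      have h1 := hx.1; have h2 := hx.2
      nlinarith [sq_nonneg (x-t), sq_nonneg (1-x), mul_nonneg (sub_nonneg.2 h1) (sub_nonneg.2 h2),
        mul_nonneg ht0 (sub_nonneg.2 h1), mul_nonneg (mul_nonneg ht0 (sub_nonneg.2 h1)) (sub_nonneg.2 h2),
        sq_nonneg x, mul_nonneg (sq_nonneg x) (sub_nonneg.2 h2), sq_nonneg (x*(1-x))]
    have : a2 + b2*x + c2*x^2 + d2*x^3 = t^2 * (9*x - 3*t - (3-t)*x^2*(3-x)) / 18 := by
      rw [ha2, hb2', hc2, hd2, hmval]; ring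
    rw [this]
    positivity
  -- monotonicity of E1 on [0,t] and E2 on [t,1]
  have hstep1 : E1 0 ≤ E1 t := mono_step12 E1 _ hE1deriv h01 ht ht0 hpsi1
  have hstep2 : E2 t ≤ E2 1 := mono_step12 E2 _ hE2deriv ht h11 ht1 hpsi2
  -- endpoint values
  have hE10 : E1 0 = 0 := by
    rw [hE1]; simp [hb0, hb1]
  have hE21 : E2 1 = -(m * u 1) := by
    simp only [hE2, hb2, hb3, hc2, hd2]; ring
  have hmatch : E2 t = E1 t - u t := by
    simp only [hE1, hE2, ha2, hb2', hc1, hc2, hd1, hd2]; ring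
  have key : m * u 1 ≤ u t := by
    have h1 : (0:ℝ) ≤ E1 t := hE10 ▸ hstep1
    have h2 : E2 t ≤ -(m * u 1) := hE21 ▸ hstep2
    rw [hmatch] at h2
    linarith
  exact key
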